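/- Let v, w: [0,∞) → (0,∞) be measurable weights with C_{vw} = ∫_0^∞ (∫_s^∞ w(u)^{-1} du) v(s) ds < ∞. Then every x ∈ F_w^2 lies in F_v^1 and ‖x‖_{F_v^1} ≤ C_{vw}^{1/2} ‖x‖_{F_w^2}; i.e., the inclusion F_w^2 ↪ F_v^1 is a bounded linear map. -/

import Mathlib

open MeasureTheory Set


theorem myCS (w f : ℝ → ℝ) (s : ℝ)
    (hwpos : ∀ u ∈ Ioi s, 0 < w u)
    (hw1 : IntegrableOn (fun u => (w u)⁻¹) (Ioi s))
    (hfint : IntegrableOn f (Ioi s))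
    (hf2 : IntegrableOn (fun u => f u ^ 2 * w u) (Ioi s)) :
    (∫ u in Ioi s, f u) ^ 2 ≤ (∫ u in Ioi s, (w u)⁻¹) * ∫ u in Ioi s, f u ^ 2 * w u := by
  set μ := volume.restrict (Ioi s)
  have hwae : ∀ᵐ u ∂μ, 0 < w u := (ae_restrict_iff' measurableSet_Ioi).2 (.of_forall hwpos)
  have hwinv_m : AEMeasurable (fun u => (w u)⁻¹) μ := hw1.aemeasurable
  have hw_m : AEMeasurable w μ := by
    have : w = fun u => ((w u)⁻¹)⁻¹ := by ext u; simp
    rw [this]; exact hwinv_m.inv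
  set F : ℝ → ℝ := fun u => Real.sqrt ((w u)⁻¹) with hF_def
  set G : ℝ → ℝ := fun u => f u * Real.sqrt (w u) with hG_def
  have hF_m : AEStronglyMeasurable F μ :=
    (Real.continuous_sqrt.measurable.comp_aemeasurable hwinv_m).aestronglyMeasurable
  have hG_m : AEStronglyMeasurable G μ :=
    (hfint.aemeasurable.mul
      (Real.continuous_sqrt.measurable.comp_aemeasurable hw_m)).aestronglyMeasurable
  have hFsq : (fun u => F u ^ 2) =ᵐ[μ] fun u => (w u)⁻¹ := by
    filter_upwards [hwae] with u hu
    exact Real.sq_sqrt (by positivity)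
  have hGsq : (fun u => G u ^ 2) =ᵐ[μ] fun u => f u ^ 2 * w u := by
    filter_upwards [hwae] with u hu
    simp only [G, mul_pow]
    rw [Real.sq_sqrt hu.le]
  have hF : MemLp F (ENNReal.ofReal 2) μ := by
    rw [show ENNReal.ofReal 2 = 2 by norm_num]
    exact (memLp_two_iff_integrable_sq hF_m).2 (hw1.congr hFsq.symm)
  have hG : MemLp G (ENNReal.ofReal 2) μ := by
    rw [show ENNReal.ofReal 2 = 2 by norm_num]
    exact (memLp_two_iff_integrable_sq hG_m).2 (hf2.congr hGsq.symm)
  have hpq : (2:ℝ).HolderConjugate 2 := by constructor <;> norm_num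
  have CS := integral_mul_norm_le_Lp_mul_Lq hpq hF hG
  have habs : (fun u => ‖F u‖ * ‖G u‖) =ᵐ[μ] fun u => |f u| := by
    filter_upwards [hwae] with u hu
    have h1 : F u * G u = f u := by
      simp only [F, G]
      rw [Real.sqrt_inv]
      field_simp [Real.sqrt_ne_zero'.2 hu]
    calc ‖F u‖ * ‖G u‖ = |F u * G u| := (abs_mul _ _).symm
    _ = |f u| := by rw [h1]
  have hFn : (fun u => ‖F u‖ ^ (2:ℝ)) =ᵐ[μ] fun u => (w u)⁻¹ := by
    refine Filter.EventuallyEq.trans ?_ hFsq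
    refine .of_forall fun u => ?_
    show ‖F u‖ ^ (2:ℝ) = F u ^ (2:ℕ)
    rw [Real.norm_eq_abs, show (2:ℝ) = ((2:ℕ):ℝ) by norm_num, Real.rpow_natCast, sq_abs]
  have hGn : (fun u => ‖G u‖ ^ (2:ℝ)) =ᵐ[μ] fun u => f u ^ 2 * w u := by
    refine Filter.EventuallyEq.trans ?_ hGsq
    refine .of_forall fun u => ?_
    show ‖G u‖ ^ (2:ℝ) = G u ^ (2:ℕ)
    rw [Real.norm_eq_abs, show (2:ℝ) = ((2:ℕ):ℝ) by norm_num, Real.rpow_natCast, sq_abs]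
  rw [integral_congr_ae habs, integral_congr_ae hFn, integral_congr_ae hGn] at CS
  have hA : 0 ≤ ∫ u in Ioi s, (w u)⁻¹ :=
    integral_nonneg_of_ae <| by filter_upwards [hwae] with u hu; positivity
  have hB : 0 ≤ ∫ u in Ioi s, f u ^ 2 * w u :=
    integral_nonneg_of_ae <| by filter_upwards [hwae] with u hu; positivity
  have h1 : |∫ u in Ioi s, f u| ≤ ∫ u in Ioi s, |f u| := by
    simpa using norm_integral_le_integral_norm (μ := μ) f
  have h2 : (∫ u in Ioi s, f u) ^ 2 ≤ (∫ u in Ioi s, |f u|) ^ 2 := by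
    rw [← sq_abs]
    exact pow_le_pow_left₀ (abs_nonneg _) h1 2
  refine h2.trans ?_
  calc (∫ u in Ioi s, |f u|) ^ 2
      ≤ ((∫ u in Ioi s, (w u)⁻¹) ^ (1/2:ℝ) * (∫ u in Ioi s, f u ^ 2 * w u) ^ (1/2:ℝ)) ^ 2 := by
        refine pow_le_pow_left₀ (integral_nonneg fun u => abs_nonneg _) CS 2
    _ = (∫ u in Ioi s, (w u)⁻¹) * ∫ u in Ioi s, f u ^ 2 * w u := by
        rw [mul_pow, ← Real.rpow_natCast (_ ^ (1/2:ℝ)) 2, ← Real.rpow_natCast (_ ^ (1/2:ℝ)) 2,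
          ← Real.rpow_mul hA, ← Real.rpow_mul hB]
        norm_num

theorem myAnti (g : ℝ → ℝ) (hg : IntegrableOn g (Ioi 0))
    (hg0 : 0 ≤ᵐ[volume.restrict (Ioi 0)] g) :
    Antitone (fun s => ∫ u in Ioi (max s 0), g u) := by
  intro s t hst
  refine setIntegral_mono_set (hg.mono_set (Ioi_subset_Ioi (le_max_right s 0)))
    (ae_restrict_of_ae_restrict_of_subset (Ioi_subset_Ioi (le_max_right s 0)) hg0) ?_
  exact HasSubset.Subset.eventuallyLE (Ioi_subset_Ioi (max_le_max hst le_rfl))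

theorem myPos (w : ℝ → ℝ) (s : ℝ)
    (hw : ∀ u ∈ Ioi s, 0 < w u)
    (hw1 : IntegrableOn (fun u => (w u)⁻¹) (Ioi s)) :
    0 < ∫ u in Ioi s, (w u)⁻¹ := by
  rw [setIntegral_pos_iff_support_of_nonneg_ae
    ((ae_restrict_iff' measurableSet_Ioi).2 (.of_forall fun u hu => by
      have := hw u hu; positivity)) hw1]
  have hsub : Ioi s ⊆ Function.support (fun u => (w u)⁻¹) ∩ Ioi s := fun u hu =>
    ⟨by simp [Function.mem_support, (hw u hu).ne'], hu⟩
  calc (0:ENNReal) < volume (Ioi s) := by simp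
  _ ≤ _ := measure_mono hsub

/-- If `C_{vw} = ∫_0^∞ (∫_s^∞ w(u)⁻¹ du) v(s) ds < ∞` then every `x ∈ F_w^2` lies in `F_v^1`
with `‖x‖_{F_v^1} ≤ C_{vw}^{1/2} ‖x‖_{F_w^2}`, i.e. the inclusion `F_w^2 ↪ F_v^1` is bounded.
Here `d1 = x'` and `d2 = x''`, with `x' s = -∫_s^∞ x''`. -/

theorem stmt4 (v w : ℝ → ℝ)
    (hv : ∀ u ∈ Set.Ioi (0 : ℝ), 0 < v u)
    (hw : ∀ u ∈ Set.Ioi (0 : ℝ), 0 < w u)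
    (hw1 : IntegrableOn (fun u => (w u)⁻¹) (Set.Ioi 0))
    (hCvw : IntegrableOn (fun s => (∫ u in Set.Ioi s, (w u)⁻¹) * v s) (Set.Ioi 0))
    (x d1 d2 : ℝ → ℝ)
    (hrep' : ∀ s ∈ Set.Ici (0 : ℝ), d1 s = -∫ u in Set.Ioi s, d2 u)
    (hint' : IntegrableOn d2 (Set.Ioi 0))
    (hd2 : IntegrableOn (fun u => (d2 u) ^ 2 * w u) (Set.Ioi 0)) :
    IntegrableOn (fun s => (d1 s) ^ 2 * v s) (Set.Ioi 0) ∧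
    ∫ s in Set.Ioi (0 : ℝ), (d1 s) ^ 2 * v s ≤
      (∫ s in Set.Ioi (0 : ℝ), (∫ u in Set.Ioi s, (w u)⁻¹) * v s) *
        ∫ u in Set.Ioi (0 : ℝ), (d2 u) ^ 2 * w u := by
  set B := ∫ u in Ioi (0:ℝ), d2 u ^ 2 * w u with hBdef
  have hd2w_nonneg : 0 ≤ᵐ[volume.restrict (Ioi (0:ℝ))] fun u => d2 u ^ 2 * w u :=
    (ae_restrict_iff' measurableSet_Ioi).2 (.of_forall fun u hu => by
      have := hw u hu; positivity)
  have hB : 0 ≤ B := integral_nonneg_of_ae hd2w_nonneg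
  set I : ℝ → ℝ := fun s => ∫ u in Ioi s, (w u)⁻¹ with hIdef
  -- pointwise bound on Ioi 0
  have key : ∀ s ∈ Ioi (0:ℝ), d1 s ^ 2 * v s ≤ I s * v s * B := by
    intro s hs
    have hsub : Ioi s ⊆ Ioi (0:ℝ) := Ioi_subset_Ioi hs.le
    have hd1 : d1 s ^ 2 = (∫ u in Ioi s, d2 u) ^ 2 := by
      rw [hrep' s (Set.mem_Ici.2 (le_of_lt hs))]; ring
    have hcs := myCS w d2 s (fun u hu => hw u (hsub hu)) (hw1.mono_set hsub)
      (hint'.mono_set hsub) (hd2.mono_set hsub)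
    have hmono : ∫ u in Ioi s, d2 u ^ 2 * w u ≤ B :=
      setIntegral_mono_set hd2 hd2w_nonneg (HasSubset.Subset.eventuallyLE hsub)
    have hI0 : 0 < I s := myPos w s (fun u hu => hw u (hsub hu)) (hw1.mono_set hsub)
    have h1 : d1 s ^ 2 ≤ I s * B := by
      rw [hd1]
      exact hcs.trans (mul_le_mul_of_nonneg_left hmono hI0.le)
    calc d1 s ^ 2 * v s ≤ I s * B * v s :=
          mul_le_mul_of_nonneg_right h1 (hv s hs).le
      _ = I s * v s * B := by ring
  -- measurability
  have hP : Measurable fun s => ∫ u in Ioi (max s 0), max (d2 u) 0 :=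
    (myAnti _ hint'.pos_part (.of_forall fun u => le_max_right _ _)).measurable
  have hN : Measurable fun s => ∫ u in Ioi (max s 0), max (-d2 u) 0 :=
    (myAnti _ hint'.neg.pos_part (.of_forall fun u => le_max_right _ _)).measurable
  have hIe : Measurable fun s => ∫ u in Ioi (max s 0), (w u)⁻¹ :=
    (myAnti _ hw1 ((ae_restrict_iff' measurableSet_Ioi).2 (.of_forall fun u hu => by
      have := hw u hu; positivity))).measurable
  set G : ℝ → ℝ := fun s =>
    ((∫ u in Ioi (max s 0), max (-d2 u) 0) - ∫ u in Ioi (max s 0), max (d2 u) 0) ^ 2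
      * (∫ u in Ioi (max s 0), (w u)⁻¹)⁻¹ * (I s * v s) with hGdef
  have hGm : AEStronglyMeasurable G (volume.restrict (Ioi (0:ℝ))) :=
    (((hN.sub hP).pow_const 2).mul hIe.inv).aestronglyMeasurable.mul hCvw.aestronglyMeasurable
  have hGeq : G =ᵐ[volume.restrict (Ioi (0:ℝ))] fun s => d1 s ^ 2 * v s := by
    refine (ae_restrict_iff' measurableSet_Ioi).2 (.of_forall fun s hs => ?_)
    have hmax : max s 0 = s := max_eq_left hs.le
    have hsub : Ioi s ⊆ Ioi (0:ℝ) := Ioi_subset_Ioi hs.le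
    have hI0 : I s ≠ 0 :=
      (myPos w s (fun u hu => hw u (hsub hu)) (hw1.mono_set hsub)).ne'
    have hsplit : ∫ u in Ioi s, d2 u =
        (∫ u in Ioi s, max (d2 u) 0) - ∫ u in Ioi s, max (-d2 u) 0 := by
      have h1 : Integrable (fun u : ℝ => max (d2 u) 0) (volume.restrict (Ioi s)) :=
        (hint'.mono_set hsub).pos_part
      have h2 : Integrable (fun u : ℝ => max (-d2 u) 0) (volume.restrict (Ioi s)) :=
        (hint'.mono_set hsub).neg.pos_part
      rw [← integral_sub h1 h2]
      refine integral_congr_ae (.of_forall fun u => ?_)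
      simp [max_def]; split_ifs with h1 h2 <;> linarith
    have hd1s : d1 s = (∫ u in Ioi s, max (-d2 u) 0) - ∫ u in Ioi s, max (d2 u) 0 := by
      rw [hrep' s (Set.mem_Ici.2 (le_of_lt hs)), hsplit]; ring
    simp only [G, hmax, ← hd1s, ← hIdef]
    rw [mul_assoc (d1 s ^ 2), inv_mul_cancel_left₀ hI0]
  have hmeas : AEStronglyMeasurable (fun s => d1 s ^ 2 * v s) (volume.restrict (Ioi (0:ℝ))) :=
    hGm.congr hGeq
  have hbound : ∀ᵐ s ∂volume.restrict (Ioi (0:ℝ)), ‖d1 s ^ 2 * v s‖ ≤ I s * v s * B := by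
    refine (ae_restrict_iff' measurableSet_Ioi).2 (.of_forall fun s hs => ?_)
    rw [Real.norm_eq_abs, abs_of_nonneg (by have := hv s hs; positivity)]
    exact key s hs
  have hIntB : IntegrableOn (fun s => I s * v s * B) (Ioi (0:ℝ)) := hCvw.mul_const B
  have hInt : IntegrableOn (fun s => d1 s ^ 2 * v s) (Ioi (0:ℝ)) :=
    Integrable.mono' hIntB hmeas hbound
  refine ⟨hInt, ?_⟩
  calc ∫ s in Ioi (0:ℝ), d1 s ^ 2 * v s ≤ ∫ s in Ioi (0:ℝ), I s * v s * B := by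
        refine integral_mono_ae hInt hIntB ?_
        refine (ae_restrict_iff' measurableSet_Ioi).2 (.of_forall fun s hs => key s hs)
    _ = (∫ s in Ioi (0:ℝ), I s * v s) * B := by rw [integral_mul_const]
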